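/- For every P1, P2, Q > 0, 0 < N1 < N2, γ ∈ [0,1], β ∈ [0,1], α ∈ [0,1], and ρ ∈ [0,1] with ρ(1−γ)P1 ≤ Q, the generalized dirty paper coding rate satisfies min{ r1(γ,ρ,β,α), r2(γ,ρ,β,α) } ≤ sup_{β'∈[0,1]} min{ C(β'(1−γ)P1/(γP1+N1)), C(((1−γ)P1+P2+2√((1−β')(1−γ)P1P2))/(γP1+N2)) }; that is, the GDPC inner bound for the D-AWGN PC-RBC with informed source only lies within the outer bound given by the capacity region with state known at both source and relay. -/
import Mathlib


/-!
The generalized dirty paper coding (GDPC) inner bound of the D-AWGN partially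
cooperative relay broadcast channel with informed source only lies within the
outer bound given by the capacity region with state known at both the source and
the relay: a purely analytic inequality between the corresponding rate formulas.
-/

noncomputable section

namespace DAWGN

/-- `C(x) = (1/2)·log₂(1+x)`. -/
def Cfun (x : ℝ) : ℝ := (1 / 2) * Real.logb 2 (1 + x)
/-! ### The generalized dirty paper coding (GDPC) rates -/

/-- `Q'(γ,ρ) = (√Q − √(ρ(1−γ)P₁))²`, the power of the residual state after
partial state cancellation. -/
def Qd (P1 Q γ ρ : ℝ) : ℝ := (Real.sqrt Q - Real.sqrt (ρ * (1 - γ) * P1)) ^ 2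

/-- `A(γ,ρ,β,α)`. -/
def Agdpc (P1 Q N1 γ ρ β α : ℝ) : ℝ :=
  (1 - β ^ 2) * (1 - ρ) * (1 - γ) * P1 *
    ((1 - β ^ 2) * (1 - ρ) * (1 - γ) * P1 + Qd P1 Q γ ρ + γ * P1 + N1)

/-- `B(γ,ρ,β,α)`. -/
def Bgdpc (P1 Q N1 γ ρ β α : ℝ) : ℝ :=
  (1 - α) ^ 2 * (1 - β ^ 2) * (1 - ρ) * (1 - γ) * P1 * Qd P1 Q γ ρ +
    (N1 + γ * P1) * ((1 - β ^ 2) * (1 - ρ) * (1 - γ) * P1 + α ^ 2 * Qd P1 Q γ ρ)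

/-- `C(γ,ρ,β,α)`. -/
def Cgdpc (P1 P2 Q N2 γ ρ β α : ℝ) : ℝ :=
  (1 - β ^ 2) * (1 - ρ) * (1 - γ) * P1 *
    ((1 - ρ) * (1 - γ) * P1 + P2 + Qd P1 Q γ ρ +
      2 * β * Real.sqrt ((1 - ρ) * (1 - γ) * P1 * P2) + γ * P1 + N2)

/-- `D(γ,ρ,β,α)`. -/
def Dgdpc (P1 P2 Q N2 γ ρ β α : ℝ) : ℝ :=
  (1 - α) ^ 2 * (1 - β ^ 2) * (1 - ρ) * (1 - γ) * P1 * Qd P1 Q γ ρ +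
    (N2 + γ * P1) * ((1 - β ^ 2) * (1 - ρ) * (1 - γ) * P1 + α ^ 2 * Qd P1 Q γ ρ)

/-- `r₁(γ,ρ,β,α) = (1/2)·log₂(A/B)`. -/
def r1 (P1 Q N1 γ ρ β α : ℝ) : ℝ :=
  (1 / 2) * Real.logb 2 (Agdpc P1 Q N1 γ ρ β α / Bgdpc P1 Q N1 γ ρ β α)

/-- `r₂(γ,ρ,β,α) = (1/2)·log₂(C/D)`. -/
def r2 (P1 P2 Q N2 γ ρ β α : ℝ) : ℝ :=
  (1 / 2) * Real.logb 2 (Cgdpc P1 P2 Q N2 γ ρ β α / Dgdpc P1 P2 Q N2 γ ρ β α)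

private lemma half_logb_le {u v : ℝ} (hu : 0 ≤ u) (huv : u ≤ v) (hv : 1 ≤ v) :
    (1 / 2) * Real.logb 2 u ≤ (1 / 2) * Real.logb 2 v := by
  rcases eq_or_lt_of_le hu with h | h
  · rw [← h, Real.logb_zero]
    have := Real.logb_nonneg (by norm_num : (1:ℝ) < 2) hv
    linarith
  · have := Real.logb_le_logb_of_le (by norm_num : (1:ℝ) < 2) h huv
    linarith

private lemma key_ineq (s q n E a : ℝ) (hs : 0 ≤ s) (hq : 0 ≤ q) (hn : 0 < n)
    (hE : 0 ≤ E) :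
    n * (s * (s + q + n + E)) ≤
      (n + s + E) * ((1 - a) ^ 2 * s * q + n * (s + a ^ 2 * q)) := by
  nlinarith [mul_nonneg hq (sq_nonneg (n * a - (1 - a) * s)),
    mul_nonneg hE (mul_nonneg (mul_nonneg (sq_nonneg (1 - a)) hs) hq),
    mul_nonneg hE (mul_nonneg (mul_nonneg hn.le (sq_nonneg a)) hq)]

private lemma div_le_one_add {A B t n : ℝ} (hB : 0 ≤ B) (hn : 0 < n)
    (ht : 0 ≤ t) (hkey : n * A ≤ (n + t) * B) : A / B ≤ 1 + t / n := by
  rcases eq_or_lt_of_le hB with h | h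
  · rw [← h, div_zero]
    positivity
  · rw [div_le_iff₀ h, show (1 + t / n) = (n + t) / n by field_simp,
      div_mul_eq_mul_div, le_div_iff₀ hn]
    linarith

set_option maxHeartbeats 1000000 in
/-- For every `P₁, P₂, Q > 0`, `0 < N₁ < N₂`, `γ, β, α ∈ [0,1]`
and `ρ ∈ [0,1]` with `ρ(1−γ)P₁ ≤ Q`, the generalized dirty paper coding rate
satisfies
`min { r₁(γ,ρ,β,α), r₂(γ,ρ,β,α) } ≤
 sup_{β'∈[0,1]} min { C(β'(1−γ)P₁/(γP₁+N₁)),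
   C(((1−γ)P₁+P₂+2√((1−β')(1−γ)P₁P₂))/(γP₁+N₂)) }`. -/
theorem gdpc_rate_le_outer_bound
    (P1 P2 Q N1 N2 : ℝ) (hP1 : 0 < P1) (hP2 : 0 < P2) (hQ : 0 < Q)
    (hN1 : 0 < N1) (hN12 : N1 < N2)
    (γ β α ρ : ℝ) (hγ : γ ∈ Set.Icc (0 : ℝ) 1) (hβ : β ∈ Set.Icc (0 : ℝ) 1)
    (hα : α ∈ Set.Icc (0 : ℝ) 1) (hρ : ρ ∈ Set.Icc (0 : ℝ) 1)
    (hρQ : ρ * (1 - γ) * P1 ≤ Q) :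
    min (r1 P1 Q N1 γ ρ β α) (r2 P1 P2 Q N2 γ ρ β α) ≤
      sSup ((fun β' => min (Cfun (β' * (1 - γ) * P1 / (γ * P1 + N1)))
        (Cfun (((1 - γ) * P1 + P2 + 2 * Real.sqrt ((1 - β') * (1 - γ) * P1 * P2)) /
          (γ * P1 + N2)))) '' Set.Icc (0 : ℝ) 1) := by
  obtain ⟨hγ0, hγ1⟩ := hγ
  obtain ⟨hβ0, hβ1⟩ := hβ
  obtain ⟨hα0, hα1⟩ := hα
  obtain ⟨hρ0, hρ1⟩ := hρ
  obtain ⟨s, hs_def⟩ : ∃ s : ℝ, s = (1 - β ^ 2) * (1 - ρ) * (1 - γ) * P1 := ⟨_, rfl⟩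
  obtain ⟨q, hq_def⟩ : ∃ q : ℝ, q = Qd P1 Q γ ρ := ⟨_, rfl⟩
  obtain ⟨s', hs'_def⟩ : ∃ t : ℝ, t = (1 - ρ) * (1 - γ) * P1 := ⟨_, rfl⟩
  obtain ⟨β₀, hβ₀_def⟩ : ∃ b : ℝ, b = (1 - β ^ 2) * (1 - ρ) := ⟨_, rfl⟩
  have hβ2 : β ^ 2 ≤ 1 := by nlinarith
  have hγP : 0 ≤ (1 - γ) * P1 := by nlinarith
  have hs : 0 ≤ s := by
    rw [hs_def]
    exact mul_nonneg (mul_nonneg (mul_nonneg (by linarith) (by linarith))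
      (by linarith)) hP1.le
  have hq : 0 ≤ q := by rw [hq_def]; exact sq_nonneg _
  have hn1 : 0 < γ * P1 + N1 := by nlinarith
  have hn2 : 0 < γ * P1 + N2 := by nlinarith
  have hs' : 0 ≤ s' := by
    rw [hs'_def]
    exact mul_nonneg (mul_nonneg (by linarith) (by linarith)) hP1.le
  have hss' : s = (1 - β ^ 2) * s' := by rw [hs_def, hs'_def]; ring
  have hβ₀0 : 0 ≤ β₀ := by rw [hβ₀_def]; nlinarith
  have hβ₀1 : β₀ ≤ 1 := by rw [hβ₀_def]; nlinarith
  obtain ⟨E, hE_def⟩ :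
      ∃ E : ℝ, E = β ^ 2 * s' + P2 + 2 * β * Real.sqrt (s' * P2) := ⟨_, rfl⟩
  have hsqrt : 0 ≤ Real.sqrt (s' * P2) := Real.sqrt_nonneg _
  have hE : 0 ≤ E := by
    have h1 : 0 ≤ 2 * β * Real.sqrt (s' * P2) := by positivity
    have h2 : 0 ≤ β ^ 2 * s' := by positivity
    rw [hE_def]; linarith
  obtain ⟨T, hT_def⟩ : ∃ T : ℝ,
      T = (1 - γ) * P1 + P2 + 2 * Real.sqrt ((1 - β₀) * (1 - γ) * P1 * P2) :=
    ⟨_, rfl⟩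
  have hT : 0 ≤ T := by
    have h1 := Real.sqrt_nonneg ((1 - β₀) * (1 - γ) * P1 * P2)
    rw [hT_def]; linarith
  -- s + E ≤ T
  have hsET : s + E ≤ T := by
    have hb : β * Real.sqrt (s' * P2) = Real.sqrt (β ^ 2 * (s' * P2)) := by
      rw [Real.sqrt_mul (sq_nonneg β), Real.sqrt_sq hβ0]
    have hmono : Real.sqrt (β ^ 2 * (s' * P2)) ≤
        Real.sqrt ((1 - β₀) * (1 - γ) * P1 * P2) := by
      apply Real.sqrt_le_sqrt
      have h1 : (1 - β₀) * (1 - γ) * P1 - β ^ 2 * s' = ρ * (1 - γ) * P1 := by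
        rw [hβ₀_def, hs'_def]; ring
      have h2 : 0 ≤ ρ * (1 - γ) * P1 := by
        apply mul_nonneg (mul_nonneg hρ0 (by linarith)) hP1.le
      nlinarith
    have hss'2 : s + β ^ 2 * s' = s' := by rw [hss']; ring
    have hs'le : s' ≤ (1 - γ) * P1 := by
      rw [hs'_def]
      nlinarith [mul_nonneg (mul_nonneg hρ0 (by linarith : (0:ℝ) ≤ 1 - γ)) hP1.le]
    rw [hE_def, hT_def]
    calc s + (β ^ 2 * s' + P2 + 2 * β * Real.sqrt (s' * P2))
        = s' + P2 + 2 * (β * Real.sqrt (s' * P2)) := by rw [hss']; ring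
      _ ≤ (1 - γ) * P1 + P2 + 2 * Real.sqrt ((1 - β₀) * (1 - γ) * P1 * P2) := by
          rw [hb]; linarith
  -- rate 1 bound
  have hA : Agdpc P1 Q N1 γ ρ β α = s * (s + q + (γ * P1 + N1) + 0) := by
    rw [Agdpc, hs_def, hq_def]; ring
  have hB : Bgdpc P1 Q N1 γ ρ β α =
      (1 - α) ^ 2 * s * q + (γ * P1 + N1) * (s + α ^ 2 * q) := by
    rw [Bgdpc, hs_def, hq_def]; ring
  have hBpos : 0 ≤ Bgdpc P1 Q N1 γ ρ β α := by
    rw [hB]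
    have h1 : 0 ≤ (1 - α) ^ 2 * s * q := by positivity
    have h2 : 0 ≤ (γ * P1 + N1) * (s + α ^ 2 * q) := by positivity
    linarith
  have hApos : 0 ≤ Agdpc P1 Q N1 γ ρ β α := by
    rw [hA]
    have : (0:ℝ) ≤ s + q + (γ * P1 + N1) + 0 := by linarith
    positivity
  have hr1 : r1 P1 Q N1 γ ρ β α ≤ Cfun (β₀ * (1 - γ) * P1 / (γ * P1 + N1)) := by
    have harg : β₀ * (1 - γ) * P1 = s := by rw [hβ₀_def, hs_def]
    have hdiv : Agdpc P1 Q N1 γ ρ β α / Bgdpc P1 Q N1 γ ρ β α ≤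
        1 + s / (γ * P1 + N1) := by
      apply div_le_one_add hBpos hn1 hs
      rw [hA, hB]
      simpa using key_ineq s q (γ * P1 + N1) 0 α hs hq hn1 le_rfl
    rw [r1, Cfun, harg]
    apply half_logb_le (div_nonneg hApos hBpos) hdiv
    have := div_nonneg hs hn1.le
    linarith
  -- rate 2 bound
  have hC : Cgdpc P1 P2 Q N2 γ ρ β α = s * (s + q + (γ * P1 + N2) + E) := by
    rw [Cgdpc, hE_def, hss', hs'_def, hq_def]; ring
  have hD : Dgdpc P1 P2 Q N2 γ ρ β α =
      (1 - α) ^ 2 * s * q + (γ * P1 + N2) * (s + α ^ 2 * q) := by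
    rw [Dgdpc, hs_def, hq_def]; ring
  have hDpos : 0 ≤ Dgdpc P1 P2 Q N2 γ ρ β α := by
    rw [hD]
    have h1 : 0 ≤ (1 - α) ^ 2 * s * q := by positivity
    have h2 : 0 ≤ (γ * P1 + N2) * (s + α ^ 2 * q) := by positivity
    linarith
  have hCpos : 0 ≤ Cgdpc P1 P2 Q N2 γ ρ β α := by
    rw [hC]
    apply mul_nonneg hs
    linarith
  have hr2 : r2 P1 P2 Q N2 γ ρ β α ≤ Cfun (T / (γ * P1 + N2)) := by
    have hdiv : Cgdpc P1 P2 Q N2 γ ρ β α / Dgdpc P1 P2 Q N2 γ ρ β α ≤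
        1 + T / (γ * P1 + N2) := by
      apply div_le_one_add hDpos hn2 hT
      rw [hC, hD]
      calc (γ * P1 + N2) * (s * (s + q + (γ * P1 + N2) + E))
          ≤ ((γ * P1 + N2) + s + E) *
            ((1 - α) ^ 2 * s * q + (γ * P1 + N2) * (s + α ^ 2 * q)) :=
            key_ineq s q (γ * P1 + N2) E α hs hq hn2 hE
        _ ≤ ((γ * P1 + N2) + T) *
            ((1 - α) ^ 2 * s * q + (γ * P1 + N2) * (s + α ^ 2 * q)) := by
            apply mul_le_mul_of_nonneg_right (by linarith)
            have h1 : 0 ≤ (1 - α) ^ 2 * s * q := by positivity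
            have h2 : 0 ≤ (γ * P1 + N2) * (s + α ^ 2 * q) := by positivity
            linarith
    rw [r2, Cfun]
    apply half_logb_le (div_nonneg hCpos hDpos) hdiv
    have := div_nonneg hT hn2.le
    linarith
  -- conclude via the supremum
  have hmem : β₀ ∈ Set.Icc (0 : ℝ) 1 := ⟨hβ₀0, hβ₀1⟩
  have hbdd : BddAbove ((fun β' => min (Cfun (β' * (1 - γ) * P1 / (γ * P1 + N1)))
      (Cfun (((1 - γ) * P1 + P2 + 2 * Real.sqrt ((1 - β') * (1 - γ) * P1 * P2)) /
        (γ * P1 + N2)))) '' Set.Icc (0 : ℝ) 1) := by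
    refine ⟨Cfun ((1 - γ) * P1 / (γ * P1 + N1)), ?_⟩
    rintro x ⟨β', ⟨hb0, hb1⟩, rfl⟩
    apply le_trans (min_le_left _ _)
    rw [Cfun, Cfun]
    have hnum : 0 ≤ β' * (1 - γ) * P1 := by
      apply mul_nonneg (mul_nonneg hb0 (by linarith)) hP1.le
    have hnum2 : β' * (1 - γ) * P1 ≤ (1 - γ) * P1 := by
      nlinarith [mul_nonneg (mul_nonneg (by linarith : (0:ℝ) ≤ 1 - β')
        (by linarith : (0:ℝ) ≤ 1 - γ)) hP1.le]
    have h1 : 0 ≤ β' * (1 - γ) * P1 / (γ * P1 + N1) := div_nonneg hnum hn1.le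
    have h2 : β' * (1 - γ) * P1 / (γ * P1 + N1) ≤ (1 - γ) * P1 / (γ * P1 + N1) := by
      gcongr
    have h3 : 0 ≤ (1 - γ) * P1 / (γ * P1 + N1) := div_nonneg hγP hn1.le
    exact half_logb_le (by linarith) (by linarith) (by linarith)
  calc min (r1 P1 Q N1 γ ρ β α) (r2 P1 P2 Q N2 γ ρ β α)
      ≤ min (Cfun (β₀ * (1 - γ) * P1 / (γ * P1 + N1)))
          (Cfun (T / (γ * P1 + N2))) := min_le_min hr1 hr2
    _ ≤ sSup ((fun β' => min (Cfun (β' * (1 - γ) * P1 / (γ * P1 + N1)))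
        (Cfun (((1 - γ) * P1 + P2 + 2 * Real.sqrt ((1 - β') * (1 - γ) * P1 * P2)) /
          (γ * P1 + N2)))) '' Set.Icc (0 : ℝ) 1) := by
        apply le_csSup hbdd
        refine ⟨β₀, hmem, ?_⟩
        simp only [hT_def]

end DAWGN
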